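/- Let H = L²(μ) for a measure space (Ω, μ), let χ : Ω → {0,1} be measurable, regarded as the multiplication operator M_χ on H, α > 0, and S : H →L[ℝ] H. Then the operator I + (1/α) M_χ S† S restricted as a map on H is invertible. More precisely, for any g ∈ H, the equation u + (1/α) χ·(S†S u) = g has a unique solution u ∈ H. -/

import Mathlib

set_option maxHeartbeats 1000000

open MeasureTheory

theorem stmt_15
    {Ω : Type*} [MeasurableSpace Ω] (μ : Measure Ω)
    (χ : Ω → ℝ) (hχmeas : Measurable χ) (hχval : ∀ x, χ x = 0 ∨ χ x = 1)
    (Mχ : Lp ℝ 2 μ →L[ℝ] Lp ℝ 2 μ)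
    (hMχ : ∀ f : Lp ℝ 2 μ, (Mχ f : Ω → ℝ) =ᵐ[μ] fun x => χ x * f x)
    (α : ℝ) (hα : 0 < α) (S : Lp ℝ 2 μ →L[ℝ] Lp ℝ 2 μ) :
    ∀ g : Lp ℝ 2 μ, ∃! u : Lp ℝ 2 μ,
      u + (1/α) • Mχ ((ContinuousLinearMap.adjoint S) (S u)) = g := by
  intro g
  set c : ℝ := 1/α with hcdef
  have hc0 : 0 < c := by positivity
  set A : Lp ℝ 2 μ →L[ℝ] Lp ℝ 2 μ := (ContinuousLinearMap.adjoint S).comp S with hAdef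
  -- idempotency of Mχ
  have hidem : ∀ f : Lp ℝ 2 μ, Mχ (Mχ f) = Mχ f := by
    intro f
    refine Lp.ext ?_
    filter_upwards [hMχ (Mχ f), hMχ f] with x h1 h2
    rw [h1, h2]
    rcases hχval x with h | h <;> simp [h]
  -- self-adjointness of Mχ
  have hself : ∀ f h : Lp ℝ 2 μ, (inner ℝ (Mχ f) h : ℝ) = inner ℝ f (Mχ h) := by
    intro f h
    rw [L2.inner_def, L2.inner_def]
    refine integral_congr_ae ?_
    filter_upwards [hMχ f, hMχ h] with x h1 h2
    simp [h1, h2, RCLike.inner_apply]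
    ring
  have hApos : ∀ u : Lp ℝ 2 μ, (inner ℝ (A u) u : ℝ) = ‖S u‖^2 := by
    intro u
    rw [hAdef]
    simp [ContinuousLinearMap.adjoint_inner_left, real_inner_self_eq_norm_sq]
  set T : Lp ℝ 2 μ →L[ℝ] Lp ℝ 2 μ :=
    ContinuousLinearMap.id ℝ _ + c • (Mχ.comp (A.comp Mχ)) with hTdef
  have hT_apply : ∀ u, T u = u + c • Mχ (A (Mχ u)) := by
    intro u; simp [hTdef]
  set B : Lp ℝ 2 μ →L[ℝ] Lp ℝ 2 μ →L[ℝ] ℝ := (innerSL ℝ).comp T with hBdef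
  have hB_apply : ∀ u w, B u w = inner ℝ (T u) w := fun u w => rfl
  have hcoercive : IsCoercive B := by
    refine ⟨1, one_pos, fun u => ?_⟩
    rw [hB_apply, hT_apply, inner_add_left, real_inner_smul_left, hself, hApos,
      real_inner_self_eq_norm_sq]
    nlinarith [norm_nonneg (S (Mχ u)), sq_nonneg ‖S (Mχ u)‖]
  have hTbij : Function.Bijective T := by
    have hEeq : ∀ v, hcoercive.continuousLinearEquivOfBilin v = T v := by
      intro v
      have : ∀ w, (inner ℝ (hcoercive.continuousLinearEquivOfBilin v) w : ℝ) = inner ℝ (T v) w := by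
        intro w
        rw [hcoercive.continuousLinearEquivOfBilin_apply, hB_apply]
      exact ext_inner_right ℝ this
    have heq : ⇑(hcoercive.continuousLinearEquivOfBilin) = ⇑T := funext hEeq
    rw [← heq]
    exact hcoercive.continuousLinearEquivOfBilin.bijective
  -- auxiliary: solutions of the homogeneous equation vanish
  have huniq : ∀ w : Lp ℝ 2 μ, w + c • Mχ (A w) = 0 → w = 0 := by
    intro w hw
    have hwMχ : Mχ w = w := by
      have hw' : w = -(c • Mχ (A w)) := by
        rw [eq_neg_iff_add_eq_zero]; exact hw
      calc Mχ w = Mχ (-(c • Mχ (A w))) := by rw [← hw']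
        _ = -(c • Mχ (Mχ (A w))) := by simp
        _ = -(c • Mχ (A w)) := by rw [hidem]
        _ = w := hw'.symm
    have h0 : (0:ℝ) = ‖w‖^2 + c * ‖S w‖^2 := by
      have := congrArg (fun z => (inner ℝ z w : ℝ)) hw
      simpa [inner_add_left, real_inner_smul_left, hself, hwMχ, hApos,
        real_inner_self_eq_norm_sq] using this.symm
    have : ‖w‖^2 = 0 := by nlinarith [sq_nonneg ‖w‖, sq_nonneg ‖S w‖, norm_nonneg w]
    simpa using (pow_eq_zero_iff (n := 2) (by norm_num)).mp this
  -- existence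
  obtain ⟨v, hv⟩ := hTbij.2 (Mχ g - c • Mχ (A (g - Mχ g)))
  have hMχrhs : Mχ (Mχ g - c • Mχ (A (g - Mχ g))) = Mχ g - c • Mχ (A (g - Mχ g)) := by
    simp [hidem]
  have hvMχ : Mχ v = v := by
    have h1 : T (Mχ v) = T v := by
      have e1 : T (Mχ v) = Mχ (T v) := by
        rw [hT_apply, hT_apply]; simp [hidem]
      rw [e1, hv, hMχrhs, ← hv]
    exact hTbij.1 h1
  refine ⟨g - Mχ g + v, ?_, ?_⟩
  · have hTv : v + c • Mχ (A (Mχ v)) = Mχ g - c • Mχ (A (g - Mχ g)) := by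
      rw [← hT_apply]; exact hv
    rw [hvMχ] at hTv
    have : A (g - Mχ g + v) = A (g - Mχ g) + A v := by rw [map_add]
    calc g - Mχ g + v + c • Mχ (A (g - Mχ g + v))
        = g - Mχ g + v + c • Mχ (A (g - Mχ g)) + c • Mχ (A v) := by
          rw [this, map_add, smul_add]; abel
      _ = g := by
          have : c • Mχ (A v) = Mχ g - c • Mχ (A (g - Mχ g)) - v := by
            rw [← hTv]; abel
          rw [this]; abel
  · intro u hu
    have hdiff : (u - (g - Mχ g + v)) + c • Mχ (A (u - (g - Mχ g + v))) = 0 := by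
      have hsol : g - Mχ g + v + c • Mχ (A (g - Mχ g + v)) = g := by
        have hTv : v + c • Mχ (A (Mχ v)) = Mχ g - c • Mχ (A (g - Mχ g)) := by
          rw [← hT_apply]; exact hv
        rw [hvMχ] at hTv
        have h2 : A (g - Mχ g + v) = A (g - Mχ g) + A v := by rw [map_add]
        calc g - Mχ g + v + c • Mχ (A (g - Mχ g + v))
            = g - Mχ g + v + c • Mχ (A (g - Mχ g)) + c • Mχ (A v) := by
              rw [h2, map_add, smul_add]; abel
          _ = g := by
              have : c • Mχ (A v) = Mχ g - c • Mχ (A (g - Mχ g)) - v := by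
                rw [← hTv]; abel
              rw [this]; abel
      have : A (u - (g - Mχ g + v)) = A u - A (g - Mχ g + v) := by rw [map_sub]
      rw [this, map_sub, smul_sub]
      have hu' : u + c • Mχ (A u) = g := hu
      calc u - (g - Mχ g + v) + (c • Mχ (A u) - c • Mχ (A (g - Mχ g + v)))
          = (u + c • Mχ (A u)) - ((g - Mχ g + v) + c • Mχ (A (g - Mχ g + v))) := by abel
        _ = g - g := by rw [hu', hsol]
        _ = 0 := by abel
    have := huniq _ hdiff
    have : u - (g - Mχ g + v) = 0 := this
    linear_combination (norm := abel) this
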